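/- Let β > 0, let v_1,…,v_N > 0 and ρ_1,…,ρ_N ∈ [0,1], and define f(η) = Σ_{i=1}^{N} v_i h(ρ_i,β,η) − Σ_{i=1}^{N} v_i ρ_i. If at least one ρ_i lies in the open interval (0,1), then f(1) < 0. -/

import Mathlib

/-- The tanh-based Heaviside projection. -/
noncomputable def heavisideProj (ρ β η : ℝ) : ℝ :=
  (Real.tanh (β * η) + Real.tanh (β * (ρ - η))) /
    (Real.tanh (β * η) + Real.tanh (β * (1 - η)))

lemma hasDerivAt_tanh' (x : ℝ) : HasDerivAt Real.tanh (1 / Real.cosh x ^ 2) x := by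
  have h : HasDerivAt (fun x => Real.sinh x / Real.cosh x)
      ((Real.cosh x * Real.cosh x - Real.sinh x * Real.sinh x) / Real.cosh x ^ 2) x :=
    (Real.hasDerivAt_sinh x).div (Real.hasDerivAt_cosh x) (Real.cosh_pos x).ne'
  have h1 : Real.cosh x * Real.cosh x - Real.sinh x * Real.sinh x = 1 := by
    have := Real.cosh_sq_sub_sinh_sq x; nlinarith
  have h2 : (fun x => Real.sinh x / Real.cosh x) = Real.tanh := by
    funext y; rw [Real.tanh_eq_sinh_div_cosh]
  rw [h1] at h; rwa [h2] at h

lemma hasDerivAt_tanh_comp (β x : ℝ) :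
    HasDerivAt (fun y => Real.tanh (β * y)) (β / Real.cosh (β * x) ^ 2) x := by
  have := (hasDerivAt_tanh' (β * x)).comp x ((hasDerivAt_id x).const_mul β)
  simpa [Function.comp_def, div_eq_mul_inv, mul_comm, mul_assoc, one_mul] using this

lemma tanh_strictConcave (β : ℝ) (hβ : 0 < β) :
    StrictConcaveOn ℝ (Set.Icc (0:ℝ) 1) (fun y => Real.tanh (β * y)) := by
  have hdiff : Differentiable ℝ (fun y => Real.tanh (β * y)) :=
    fun x => (hasDerivAt_tanh_comp β x).differentiableAt
  apply StrictAntiOn.strictConcaveOn_of_deriv (convex_Icc 0 1)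
    hdiff.continuous.continuousOn
  have hderiv : deriv (fun y => Real.tanh (β * y)) = fun x => β / Real.cosh (β * x) ^ 2 := by
    funext x; exact (hasDerivAt_tanh_comp β x).deriv
  rw [hderiv, interior_Icc]
  intro x hx y hy hxy
  have hc : Real.cosh (β * x) < Real.cosh (β * y) := by
    rw [Real.cosh_lt_cosh]
    rw [abs_of_pos (mul_pos hβ hx.1), abs_of_pos (mul_pos hβ hy.1)]
    exact (mul_lt_mul_iff_right₀ hβ).2 hxy
  have h1 : (0:ℝ) < Real.cosh (β * x) ^ 2 := pow_pos (Real.cosh_pos _) 2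
  have h2 : Real.cosh (β * x) ^ 2 < Real.cosh (β * y) ^ 2 := by
    have := Real.cosh_pos (β * x); nlinarith
  exact div_lt_div_of_pos_left hβ h1 h2

lemma tanh_mul_ge (β : ℝ) (hβ : 0 < β) {t : ℝ} (ht : t ∈ Set.Icc (0:ℝ) 1) :
    t * Real.tanh β ≤ Real.tanh (β * t) := by
  have hcc := (tanh_strictConcave β hβ).concaveOn
  have := hcc.2 (Set.mem_Icc.2 ⟨le_refl 0, zero_le_one⟩)
    (Set.mem_Icc.2 ⟨zero_le_one, le_refl 1⟩) (by linarith [ht.1, ht.2] : (0:ℝ) ≤ 1 - t)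
    ht.1 (by ring)
  simpa [mul_comm] using this

lemma tanh_mul_gt (β : ℝ) (hβ : 0 < β) {t : ℝ} (ht : t ∈ Set.Ioo (0:ℝ) 1) :
    t * Real.tanh β < Real.tanh (β * t) := by
  have := (tanh_strictConcave β hβ).2 (Set.mem_Icc.2 ⟨le_refl 0, zero_le_one⟩)
    (Set.mem_Icc.2 ⟨zero_le_one, le_refl 1⟩) (by norm_num)
    (by linarith [ht.2] : (0:ℝ) < 1 - t) ht.1 (by ring)
  simpa [mul_comm] using this

lemma tanh_pos' {x : ℝ} (hx : 0 < x) : 0 < Real.tanh x := by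
  rw [Real.tanh_eq_sinh_div_cosh]
  exact div_pos (Real.sinh_pos_iff.2 hx) (Real.cosh_pos x)

lemma heaviside_at_one (r β : ℝ) (hβ : 0 < β) :
    heavisideProj r β 1 = (Real.tanh β - Real.tanh (β * (1 - r))) / Real.tanh β := by
  unfold heavisideProj
  have h1 : β * (r - 1) = -(β * (1 - r)) := by ring
  rw [h1, Real.tanh_neg]
  norm_num [Real.tanh_zero, sub_eq_add_neg]

lemma heaviside_le (r β : ℝ) (hβ : 0 < β) (hr : r ∈ Set.Icc (0:ℝ) 1) :
    heavisideProj r β 1 ≤ r := by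
  rw [heaviside_at_one r β hβ]
  have htp := tanh_pos' hβ
  rw [div_le_iff₀ htp]
  have := tanh_mul_ge β hβ (t := 1 - r) ⟨by linarith [hr.2], by linarith [hr.1]⟩
  linarith

lemma heaviside_lt (r β : ℝ) (hβ : 0 < β) (hr : r ∈ Set.Ioo (0:ℝ) 1) :
    heavisideProj r β 1 < r := by
  rw [heaviside_at_one r β hβ]
  have htp := tanh_pos' hβ
  rw [div_lt_iff₀ htp]
  have := tanh_mul_gt β hβ (t := 1 - r) ⟨by linarith [hr.2], by linarith [hr.1]⟩
  linarith

theorem volume_function_neg_at_one (N : ℕ) (β : ℝ) (hβ : 0 < β)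
    (v ρ : Fin N → ℝ) (hv : ∀ i, 0 < v i) (hρ : ∀ i, ρ i ∈ Set.Icc (0:ℝ) 1)
    (f : ℝ → ℝ)
    (hf : ∀ η, f η = (∑ i, v i * heavisideProj (ρ i) β η) - ∑ i, v i * ρ i)
    (hmid : ∃ i, ρ i ∈ Set.Ioo (0:ℝ) 1) :
    f 1 < 0 := by
  rw [hf 1, sub_neg]
  obtain ⟨j, hj⟩ := hmid
  apply Finset.sum_lt_sum
  · intro i _
    exact mul_le_mul_of_nonneg_left (heaviside_le (ρ i) β hβ (hρ i)) (hv i).le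
  · exact ⟨j, Finset.mem_univ j, (mul_lt_mul_iff_right₀ (hv j)).2 (heaviside_lt (ρ j) β hβ hj)⟩
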